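/- There are no compact constant mean curvature surfaces Σ² in Sol³ satisfying 2f² + 2 ≤ |A|² ≤ 4f² - 2 everywhere, where f is the mean curvature and |A|² the squared norm of the second fundamental form. (Granting the Simons-type formula (1/2)Δ|A|² = |∇A|² + 4 div(⟨ξ,E₃⟩AE₃^⊤) - 4 div(f⟨ξ,E₃⟩E₃^⊤) + 2K(|A|² - 2f²) - 8⟨ξ,E₃⟩²(1-⟨ξ,E₃⟩²) and the Gauss equation K = 2⟨ξ,E₃⟩² - 1 + 2f² - (1/2)|A|², the integral argument shows such a surface would have |A|² = 4f² - 2, ⟨ξ,E₃⟩ = 0, K = 0, which contradicts ⟨AE₃,E₃⟩ = 0 forcing |A|² ≥ 4f².) -/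
import Mathlib


open MeasureTheory

/-- there are no compact CMC surfaces Σ² in Sol³ with
2f² + 2 ≤ |A|² ≤ 4f² - 2 everywhere. The surface is modelled by a nonempty compact
space M with its Riemannian measure μ, constant mean curvature f ≠ 0, |A|² = nA2,
Δ|A|² = lapA2, |∇A|² = nDA2, Gaussian curvature K, c = ⟨ξ,E₃⟩, and divergence terms
d1 = div(⟨ξ,E₃⟩AE₃^⊤), d2 = div(f⟨ξ,E₃⟩E₃^⊤). We grant the Simons-type formula
(1/2)Δ|A|² = |∇A|² + 4d1 - 4d2 + 2K(|A|² - 2f²) - 8c²(1 - c²), the Gauss equation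
K = 2c² - 1 + 2f² - (1/2)|A|², the divergence theorem, and the fact that if E₃ is
everywhere tangent (c ≡ 0) then ⟨AE₃,E₃⟩ = 0 forces |A|² ≥ 4f². -/
theorem no_compact_cmc_pinched
    {M : Type*} [TopologicalSpace M] [CompactSpace M] [Nonempty M]
    [MeasurableSpace M] [BorelSpace M]
    (μ : Measure M) [IsFiniteMeasure μ] [μ.IsOpenPosMeasure]
    (f : ℝ) (hf : f ≠ 0)
    (nA2 lapA2 nDA2 K c d1 d2 : M → ℝ)
    (hnA2 : Continuous nA2) (hlapA2 : Continuous lapA2) (hnDA2 : Continuous nDA2)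
    (hK : Continuous K) (hc : Continuous c)
    (hd1 : Continuous d1) (hd2 : Continuous d2)
    (hSimons : ∀ x, (1 / 2) * lapA2 x =
      nDA2 x + 4 * d1 x - 4 * d2 x + 2 * K x * (nA2 x - 2 * f ^ 2)
        - 8 * (c x) ^ 2 * (1 - (c x) ^ 2))
    (hGauss : ∀ x, K x = 2 * (c x) ^ 2 - 1 + 2 * f ^ 2 - (1 / 2) * nA2 x)
    (hDApos : ∀ x, 0 ≤ nDA2 x)
    (hlapInt : ∫ x, lapA2 x ∂μ = 0)
    (hd1Int : ∫ x, d1 x ∂μ = 0)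
    (hd2Int : ∫ x, d2 x ∂μ = 0)
    (htang : (∀ x, c x = 0) → ∀ x, 4 * f ^ 2 ≤ nA2 x)
    (hbound : ∀ x, 2 * f ^ 2 + 2 ≤ nA2 x ∧ nA2 x ≤ 4 * f ^ 2 - 2) :
    False := by
  classical
  obtain ⟨x₀⟩ := (inferInstance : Nonempty M)
  have hf2 : 2 ≤ f ^ 2 := by nlinarith [(hbound x₀).1, (hbound x₀).2]
  obtain ⟨Q, hQdef⟩ : ∃ Q : M → ℝ,
      Q = fun x => (1 / 2) * lapA2 x - nDA2 x - 4 * d1 x + 4 * d2 x := ⟨_, rfl⟩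
  have hQcont : Continuous Q := by
    rw [hQdef]
    apply Continuous.add
    · exact ((continuous_const.mul hlapA2).sub hnDA2).sub (continuous_const.mul hd1)
    · exact continuous_const.mul hd2
  have hQform : ∀ x, Q x = 2 * K x * (nA2 x - 2 * f ^ 2)
      - 8 * (c x) ^ 2 * (1 - (c x) ^ 2) := by
    intro x
    have := hSimons x
    simp only [hQdef]
    linarith
  have hQlb : ∀ x, 8 * ((c x) ^ 2 * (c x) ^ 2)
      + 4 * (2 * f ^ 2 - (1 / 2) * nA2 x - 1) ≤ Q x := by
    intro x
    rw [hQform x, hGauss x]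
    have h1 := (hbound x).1
    have h2 := (hbound x).2
    nlinarith [sq_nonneg (c x), mul_nonneg
      (by nlinarith [sq_nonneg (c x)] :
        (0:ℝ) ≤ 2 * (c x) ^ 2 + (2 * f ^ 2 - (1 / 2) * nA2 x - 1))
      (by linarith : (0:ℝ) ≤ nA2 x - 2 * f ^ 2 - 2)]
  have hQnonneg : ∀ x, 0 ≤ Q x := by
    intro x
    have h2 := (hbound x).2
    have hlb := hQlb x
    have hp := mul_nonneg (sq_nonneg (c x)) (sq_nonneg (c x))
    linarith
  have integ : ∀ (g : M → ℝ), Continuous g → Integrable g μ := fun g hg =>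
    integrableOn_univ.mp (hg.continuousOn.integrableOn_compact' isCompact_univ
      MeasurableSet.univ)
  have hQint : Integrable Q μ := integ Q hQcont
  have h1 : Integrable (fun x => (1 / 2) * lapA2 x) μ :=
    integ _ (continuous_const.mul hlapA2)
  have h2 : Integrable nDA2 μ := integ _ hnDA2
  have h3 : Integrable (fun x => 4 * d1 x) μ := integ _ (continuous_const.mul hd1)
  have h4 : Integrable (fun x => 4 * d2 x) μ := integ _ (continuous_const.mul hd2)
  have hA : Integrable (fun x => (1 / 2) * lapA2 x - nDA2 x - 4 * d1 x) μ :=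
    ((h1.sub h2).sub h3).congr (by filter_upwards with x; simp)
  have hB : Integrable (fun x => (1 / 2) * lapA2 x - nDA2 x) μ :=
    (h1.sub h2).congr (by filter_upwards with x; simp)
  have hQI : ∫ x, Q x ∂μ = - ∫ x, nDA2 x ∂μ := by
    have e1 : ∫ x, Q x ∂μ
        = (∫ x, ((1 / 2) * lapA2 x - nDA2 x - 4 * d1 x) ∂μ) + ∫ x, 4 * d2 x ∂μ := by
      simp only [hQdef]
      exact integral_add hA h4
    have e2 : ∫ x, ((1 / 2) * lapA2 x - nDA2 x - 4 * d1 x) ∂μ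
        = (∫ x, ((1 / 2) * lapA2 x - nDA2 x) ∂μ) - ∫ x, 4 * d1 x ∂μ :=
      integral_sub hB h3
    have e3 : ∫ x, ((1 / 2) * lapA2 x - nDA2 x) ∂μ
        = (∫ x, (1 / 2) * lapA2 x ∂μ) - ∫ x, nDA2 x ∂μ :=
      integral_sub h1 h2
    rw [e1, e2, e3, integral_const_mul, integral_const_mul, integral_const_mul,
      hlapInt, hd1Int, hd2Int]
    ring
  have hDAI : 0 ≤ ∫ x, nDA2 x ∂μ := integral_nonneg hDApos
  have hQI0 : ∫ x, Q x ∂μ = 0 := by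
    have : 0 ≤ ∫ x, Q x ∂μ := integral_nonneg hQnonneg
    linarith
  have hQae : Q =ᵐ[μ] 0 :=
    (integral_eq_zero_iff_of_nonneg hQnonneg hQint).mp hQI0
  have hQ0 : Q = 0 := (hQcont.ae_eq_iff_eq μ continuous_const).mp hQae
  have hQzero : ∀ x, Q x = 0 := fun x => by simpa using congrFun hQ0 x
  have hczero : ∀ x, c x = 0 := by
    intro x
    have hlb := hQlb x
    have hb2 := (hbound x).2
    have hq := hQzero x
    have hp := mul_nonneg (sq_nonneg (c x)) (sq_nonneg (c x))
    have hle : 8 * ((c x) ^ 2 * (c x) ^ 2)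
        + 4 * (2 * f ^ 2 - (1 / 2) * nA2 x - 1) ≤ 0 := le_of_le_of_eq hlb hq
    have h40 : (c x) ^ 2 * (c x) ^ 2 = 0 := by nlinarith [hle, hb2, hp]
    have hsq : (c x) ^ 2 = 0 := mul_self_eq_zero.mp h40
    exact pow_eq_zero_iff two_ne_zero |>.mp hsq
  have := htang hczero x₀
  have hb := (hbound x₀).2
  linarith
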